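/- Deterministic oracle inequality (Theorem 7): let = argmin_B {‖Y − XB‖_F² + μ·rank(B)} with Y = XA + E and P the projection onto the column space of X. Then for any θ > 0 with c(θ) = 1 + 2/θ, on the event (1+θ)d₁²(PE) ≤ μ, for every p×n matrix B: ‖XÂ − XA‖_F² ≤ c(θ)²‖XB − XA‖_F² + 2c(θ)·μ·rank(B). -/

import Mathlib

open Matrix MeasureTheory

/-- List of singular values of a real matrix, sorted in decreasing order
(square roots of the eigenvalues of `Aᵀ * A`). -/
noncomputable def svList {m n : ℕ} (A : Matrix (Fin m) (Fin n) ℝ) : List ℝ :=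
  (((List.ofFn (show (Aᵀ * A).IsHermitian by
    rw [Matrix.IsHermitian, Matrix.conjTranspose_eq_transpose_of_trivial, Matrix.transpose_mul,
      Matrix.transpose_transpose]).eigenvalues).map Real.sqrt).mergeSort
    (fun a b => decide (b ≤ a)))

/-- `sv A k` is the `k`-th largest singular value of `A` (1-indexed); `0` if `k` exceeds
the number of singular values. -/
noncomputable def sv {m n : ℕ} (A : Matrix (Fin m) (Fin n) ℝ) (k : ℕ) : ℝ :=
  (svList A).getD (k - 1) 0

/-- Nuclear norm: sum of the singular values. -/
noncomputable def nuclearNorm {m n : ℕ} (A : Matrix (Fin m) (Fin n) ℝ) : ℝ :=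
  (svList A).sum

/-- Squared Frobenius norm. -/
noncomputable def frobSq {m n : ℕ} (A : Matrix (Fin m) (Fin n) ℝ) : ℝ :=
  ∑ i, ∑ j, (A i j) ^ 2

/-- Frobenius inner product. -/
noncomputable def frobInner {m n : ℕ} (C D : Matrix (Fin m) (Fin n) ℝ) : ℝ :=
  ∑ i, ∑ j, C i j * D i j

/-! ### Auxiliary lemmas -/

section Aux

lemma Matrix.isHermitian_transpose_mul_self {m n : ℕ} (A : Matrix (Fin m) (Fin n) ℝ) :
    (Aᵀ * A).IsHermitian := by
  rw [Matrix.IsHermitian, Matrix.conjTranspose_eq_transpose_of_trivial, Matrix.transpose_mul,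
    Matrix.transpose_transpose]

lemma le_head_mergeSort (l : List ℝ) (x : ℝ) (hx : x ∈ l) :
    x ≤ (l.mergeSort (fun a b => decide (b ≤ a))).getD 0 0 := by
  have hperm := l.mergeSort_perm (fun a b => decide (b ≤ a))
  have hmem : x ∈ l.mergeSort (fun a b => decide (b ≤ a)) := hperm.mem_iff.mpr hx
  have hsort := List.pairwise_mergeSort (le := fun a b => decide (b ≤ a))
    (fun a b c hab hbc => by simp_all; linarith)
    (fun a b => by simp [le_total b a]) l
  rcases h : l.mergeSort (fun a b => decide (b ≤ a)) with _ | ⟨a, t⟩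
  · simp [h] at hmem
  · rw [h] at hmem hsort
    simp only [List.getD_cons_zero]
    rcases List.mem_cons.mp hmem with rfl | hxt
    · exact le_refl x
    · have := (List.pairwise_cons.mp hsort).1 x hxt
      simp at this
      exact this

lemma sv_mem_le {m n : ℕ} (N : Matrix (Fin m) (Fin n) ℝ) (i : Fin n) :
    Real.sqrt ((Matrix.isHermitian_transpose_mul_self N).eigenvalues i) ≤ sv N 1 := by
  apply le_head_mergeSort
  simp only [List.mem_map]
  exact ⟨_, List.mem_ofFn.mpr ⟨i, rfl⟩, rfl⟩

lemma sv_nonneg {m n : ℕ} (N : Matrix (Fin m) (Fin n) ℝ) : 0 ≤ sv N 1 := by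
  unfold sv svList
  rcases h : (((List.ofFn (Matrix.isHermitian_transpose_mul_self N).eigenvalues).map
      Real.sqrt).mergeSort (fun a b => decide (b ≤ a))) with _ | ⟨a, t⟩
  · simp
  · have : a ∈ (((List.ofFn (Matrix.isHermitian_transpose_mul_self N).eigenvalues).map
        Real.sqrt).mergeSort (fun a b => decide (b ≤ a))) := by rw [h]; exact List.mem_cons_self
    have := (List.mergeSort_perm _ _).mem_iff.mp this
    simp only [List.mem_map] at this
    obtain ⟨y, -, rfl⟩ := this
    exact Real.sqrt_nonneg y

lemma eigen_le_sv_sq {m n : ℕ} (N : Matrix (Fin m) (Fin n) ℝ) (i : Fin n) :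
    (Matrix.isHermitian_transpose_mul_self N).eigenvalues i ≤ (sv N 1) ^ 2 := by
  have h1 := sv_mem_le N i
  have h0 : 0 ≤ (Matrix.isHermitian_transpose_mul_self N).eigenvalues i :=
    (Matrix.posSemidef_conjTranspose_mul_self N).eigenvalues_nonneg i
  calc (Matrix.isHermitian_transpose_mul_self N).eigenvalues i
      = (Real.sqrt ((Matrix.isHermitian_transpose_mul_self N).eigenvalues i)) ^ 2 := by
        rw [Real.sq_sqrt h0]
    _ ≤ (sv N 1) ^ 2 := by
        nlinarith [Real.sqrt_nonneg ((Matrix.isHermitian_transpose_mul_self N).eigenvalues i)]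

lemma quad_le {m n : ℕ} (N : Matrix (Fin m) (Fin n) ℝ) (w : Fin n → ℝ) (c : ℝ)
    (hc : ∀ i, (Matrix.isHermitian_transpose_mul_self N).eigenvalues i ≤ c) :
    (N *ᵥ w) ⬝ᵥ (N *ᵥ w) ≤ c * (w ⬝ᵥ w) := by
  have hA := Matrix.isHermitian_transpose_mul_self N
  set U : Matrix (Fin n) (Fin n) ℝ := (hA.eigenvectorUnitary : Matrix (Fin n) (Fin n) ℝ) with hU
  have hUU : U * star U = 1 := Unitary.mul_star_self_of_mem hA.eigenvectorUnitary.2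
  have hspec : Nᵀ * N = U * diagonal hA.eigenvalues * star U := by
    simpa using hA.spectral_theorem
  have hstep : (N *ᵥ w) ⬝ᵥ (N *ᵥ w) = w ⬝ᵥ ((Nᵀ * N) *ᵥ w) := by
    rw [Matrix.dotProduct_mulVec w, ← Matrix.mulVec_transpose, Matrix.transpose_mul,
      Matrix.transpose_transpose, ← Matrix.mulVec_mulVec]
    rw [Matrix.dotProduct_mulVec, ← Matrix.mulVec_transpose]
  set z : Fin n → ℝ := star U *ᵥ w with hz
  have hwU : w ᵥ* U = z := by
    rw [hz]
    have hsU : star U = Uᵀ := by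
      ext i j; simp [Matrix.star_eq_conjTranspose, Matrix.conjTranspose_apply]
    rw [hsU, Matrix.mulVec_transpose]
  have hmain : w ⬝ᵥ ((Nᵀ * N) *ᵥ w) = z ⬝ᵥ (diagonal hA.eigenvalues *ᵥ z) := by
    conv_lhs => rw [hspec]
    rw [← Matrix.mulVec_mulVec, Matrix.dotProduct_mulVec w, ← Matrix.vecMul_vecMul, hwU]
    show (z ᵥ* diagonal hA.eigenvalues) ⬝ᵥ z = _
    simp only [dotProduct, Matrix.vecMul_diagonal, Matrix.mulVec_diagonal]
    exact Finset.sum_congr rfl fun i _ => by ring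
  have hzz : z ⬝ᵥ z = w ⬝ᵥ w := by
    rw [hz, Matrix.dotProduct_mulVec, Matrix.star_eq_conjTranspose, ← Matrix.mulVec_transpose,
      Matrix.mulVec_mulVec]
    have h1 : Uᴴᵀ * Uᴴ = 1 := by
      have h2 : Uᴴᵀ = U := by ext i j; simp [Matrix.conjTranspose_apply]
      rw [h2, ← Matrix.star_eq_conjTranspose, hUU]
    rw [h1, Matrix.one_mulVec]
  rw [hstep, hmain, ← hzz]
  have hexp : z ⬝ᵥ (diagonal hA.eigenvalues *ᵥ z) = ∑ i, hA.eigenvalues i * z i ^ 2 := by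
    simp only [dotProduct, Matrix.mulVec_diagonal]
    exact Finset.sum_congr rfl fun i _ => by ring
  rw [hexp]
  have hzc : c * (z ⬝ᵥ z) = ∑ i, c * z i ^ 2 := by
    simp only [dotProduct, Finset.mul_sum]
    exact Finset.sum_congr rfl fun i _ => by ring
  rw [hzc]
  exact Finset.sum_le_sum fun i _ => mul_le_mul_of_nonneg_right (hc i) (sq_nonneg _)

lemma dot_self_nonneg {k : ℕ} (v : Fin k → ℝ) : 0 ≤ v ⬝ᵥ v :=
  Finset.sum_nonneg fun i _ => mul_self_nonneg _

lemma dot_CS {k : ℕ} (u v : Fin k → ℝ) :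
    u ⬝ᵥ v ≤ Real.sqrt (u ⬝ᵥ u) * Real.sqrt (v ⬝ᵥ v) := by
  have h := Real.sum_mul_le_sqrt_mul_sqrt (Finset.univ : Finset (Fin k)) u v
  have h1 : ∑ i, u i ^ 2 = u ⬝ᵥ u := Finset.sum_congr rfl fun i _ => by rw [pow_two]
  have h2 : ∑ i, v i ^ 2 = v ⬝ᵥ v := Finset.sum_congr rfl fun i _ => by rw [pow_two]
  rw [h1, h2] at h
  exact h

lemma op_bound {m n : ℕ} (N : Matrix (Fin m) (Fin n) ℝ) (u : Fin m → ℝ) :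
    (Nᵀ *ᵥ u) ⬝ᵥ (Nᵀ *ᵥ u) ≤ (sv N 1) ^ 2 * (u ⬝ᵥ u) := by
  have hd : 0 ≤ sv N 1 := sv_nonneg N
  have hq := quad_le N (Nᵀ *ᵥ u) ((sv N 1) ^ 2) (eigen_le_sv_sq N)
  have h1 : (Nᵀ *ᵥ u) ⬝ᵥ (Nᵀ *ᵥ u) = u ⬝ᵥ (N *ᵥ (Nᵀ *ᵥ u)) := by
    rw [Matrix.dotProduct_mulVec, ← Matrix.mulVec_transpose, Matrix.transpose_transpose]
    exact dotProduct_comm _ _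
  have hCS := dot_CS u (N *ᵥ (Nᵀ *ᵥ u))
  set t := (Nᵀ *ᵥ u) ⬝ᵥ (Nᵀ *ᵥ u) with ht
  set s := u ⬝ᵥ u with hs
  have ht0 : 0 ≤ t := dot_self_nonneg _
  have hs0 : 0 ≤ s := dot_self_nonneg _
  have h2 : (N *ᵥ (Nᵀ *ᵥ u)) ⬝ᵥ (N *ᵥ (Nᵀ *ᵥ u)) ≤ (sv N 1) ^ 2 * t := hq
  have h3 : t ≤ Real.sqrt s * Real.sqrt ((sv N 1) ^ 2 * t) := by
    calc t = u ⬝ᵥ (N *ᵥ (Nᵀ *ᵥ u)) := h1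
      _ ≤ Real.sqrt s * Real.sqrt ((N *ᵥ (Nᵀ *ᵥ u)) ⬝ᵥ (N *ᵥ (Nᵀ *ᵥ u))) := hCS
      _ ≤ Real.sqrt s * Real.sqrt ((sv N 1) ^ 2 * t) :=
          mul_le_mul_of_nonneg_left (Real.sqrt_le_sqrt h2) (Real.sqrt_nonneg _)
  have h4 : Real.sqrt ((sv N 1) ^ 2 * t) = sv N 1 * Real.sqrt t := by
    rw [Real.sqrt_mul (sq_nonneg _), Real.sqrt_sq hd]
  rw [h4] at h3
  have h5 : Real.sqrt t * Real.sqrt t = t := Real.mul_self_sqrt ht0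
  have h6 : Real.sqrt s * Real.sqrt s = s := Real.mul_self_sqrt hs0
  nlinarith [Real.sqrt_nonneg t, Real.sqrt_nonneg s, sq_nonneg (sv N 1 * Real.sqrt s - Real.sqrt t)]

lemma euc_inner_eq {m : ℕ} (v w : EuclideanSpace ℝ (Fin m)) :
    (inner ℝ v w : ℝ) = ∑ k, v k * w k := by
  simp [PiLp.inner_apply, RCLike.inner_apply, starRingEnd_apply, star_trivial]
  exact Finset.sum_congr rfl fun _ _ => mul_comm _ _

lemma frobInner_le_key {m n : ℕ} (N M : Matrix (Fin m) (Fin n) ℝ) (d : ℝ) (hd : 0 ≤ d)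
    (hN : ∀ u : Fin m → ℝ, (Nᵀ *ᵥ u) ⬝ᵥ (Nᵀ *ᵥ u) ≤ d ^ 2 * (u ⬝ᵥ u)) :
    frobInner N M ≤ d * Real.sqrt (M.rank) * Real.sqrt (frobSq M) := by
  classical
  set e := (WithLp.linearEquiv 2 ℝ (Fin m → ℝ)).symm with he
  set S : Submodule ℝ (EuclideanSpace ℝ (Fin m)) :=
    (LinearMap.range M.mulVecLin).map (e : (Fin m → ℝ) →ₗ[ℝ] EuclideanSpace ℝ (Fin m)) with hS
  have hrank : (M.rank : ℝ) = (Module.finrank ℝ S : ℝ) := by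
    have h := LinearEquiv.finrank_map_eq e (LinearMap.range M.mulVecLin)
    rw [hS]
    rw [show Matrix.rank M = Module.finrank ℝ (LinearMap.range M.mulVecLin) from rfl, ← h]
  set r := Module.finrank ℝ S with hr
  set b := stdOrthonormalBasis ℝ S with hb
  have hcol : ∀ j : Fin n, e (fun i => M i j) ∈ S := by
    intro j
    refine ⟨fun i => M i j, ⟨Pi.single j 1, ?_⟩, rfl⟩
    ext i
    simp [Matrix.mulVecLin_apply, Matrix.mulVec_single]
  set x : Fin n → S := fun j => ⟨e (fun i => M i j), hcol j⟩ with hx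
  set c : Fin r → Fin n → ℝ := fun i j => b.repr (x j) i with hc
  set u : Fin r → EuclideanSpace ℝ (Fin m) := fun i => (b i : EuclideanSpace ℝ (Fin m)) with hu
  set g : Fin r → Fin n → ℝ := fun i j => (Nᵀ *ᵥ (fun k => u i k)) j with hg
  have hrepr : ∀ j, (x j : EuclideanSpace ℝ (Fin m)) = ∑ i, c i j • u i := by
    intro j
    have h2 : (∑ i, c i j • b i) = x j := b.sum_repr (x j)
    rw [← h2]
    simp [hu]
  have step1 : frobInner N M = ∑ j, ∑ i, c i j * g i j := by
    rw [frobInner, Finset.sum_comm]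
    refine Finset.sum_congr rfl fun j _ => ?_
    have h1 : ∑ i, N i j * M i j
        = (inner ℝ (e (fun i => N i j)) ((x j : EuclideanSpace ℝ (Fin m))) : ℝ) := by
      rw [euc_inner_eq]
      rfl
    rw [h1, hrepr j, inner_sum]
    refine Finset.sum_congr rfl fun i _ => ?_
    rw [real_inner_smul_right]
    congr 1
    rw [euc_inner_eq]; rfl
  have hCS : frobInner N M ≤ Real.sqrt (∑ q : Fin n × Fin r, c q.2 q.1 ^ 2) *
      Real.sqrt (∑ q : Fin n × Fin r, g q.2 q.1 ^ 2) := by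
    rw [step1]
    have h := Real.sum_mul_le_sqrt_mul_sqrt (Finset.univ : Finset (Fin n × Fin r))
      (fun q => c q.2 q.1) (fun q => g q.2 q.1)
    rw [Fintype.sum_prod_type] at h
    exact h
  have hcsum : ∑ q : Fin n × Fin r, c q.2 q.1 ^ 2 = frobSq M := by
    rw [Fintype.sum_prod_type]
    have h3 : ∀ j, ∑ i, c i j ^ 2 = ∑ k, (M k j) ^ 2 := by
      intro j
      have h4 : ∑ i, c i j ^ 2 = ‖b.repr (x j)‖ ^ 2 := by
        rw [EuclideanSpace.norm_eq, Real.sq_sqrt (by positivity)]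
        simp [sq_abs]
        rfl
      have h5 : ‖(x j : EuclideanSpace ℝ (Fin m))‖ ^ 2 = ∑ k, (M k j) ^ 2 := by
        rw [EuclideanSpace.norm_eq, Real.sq_sqrt (by positivity)]
        simp only [Real.norm_eq_abs, sq_abs]
        rfl
      rw [h4, b.repr.norm_map, ← h5]
      rfl
    have h3' : ∑ j : Fin n, ∑ i : Fin r, c i j ^ 2 = ∑ j : Fin n, ∑ k : Fin m, (M k j) ^ 2 :=
      Finset.sum_congr rfl fun j _ => h3 j
    rw [h3', frobSq]
    exact (Finset.sum_comm ..).symm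
  have hgsum : ∑ q : Fin n × Fin r, g q.2 q.1 ^ 2 ≤ (r : ℝ) * d ^ 2 := by
    have h9 : ∑ q : Fin n × Fin r, g q.2 q.1 ^ 2 = ∑ i : Fin r, ∑ j : Fin n, g i j ^ 2 := by
      rw [Fintype.sum_prod_type]
      exact Finset.sum_comm ..
    rw [h9]
    have h7 : ∀ i, ∑ j, g i j ^ 2 ≤ d ^ 2 := by
      intro i
      have h5 := hN (fun k => u i k)
      have h6 : ((fun k => u i k) ⬝ᵥ fun k => u i k) = 1 := by
        have h8 : (inner ℝ (u i) (u i) : ℝ) = 1 := by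
          have hn : ‖b i‖ = 1 := b.orthonormal.1 i
          rw [real_inner_self_eq_norm_sq, show ‖u i‖ = ‖b i‖ from rfl, hn, one_pow]
        rw [euc_inner_eq] at h8
        exact h8
      calc ∑ j, g i j ^ 2 = (Nᵀ *ᵥ fun k => u i k) ⬝ᵥ (Nᵀ *ᵥ fun k => u i k) := by
            simp only [hg, dotProduct, pow_two]
        _ ≤ d ^ 2 * ((fun k => u i k) ⬝ᵥ fun k => u i k) := h5
        _ = d ^ 2 := by rw [h6, mul_one]
    calc ∑ i : Fin r, ∑ j, g i j ^ 2 ≤ ∑ _i : Fin r, d ^ 2 :=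
          Finset.sum_le_sum fun i _ => h7 i
      _ = (r : ℝ) * d ^ 2 := by simp [Finset.sum_const, nsmul_eq_mul]
  have hsqrt : Real.sqrt ((r : ℝ) * d ^ 2) = Real.sqrt (r : ℝ) * d := by
    rw [Real.sqrt_mul (Nat.cast_nonneg r), Real.sqrt_sq hd]
  calc frobInner N M ≤ Real.sqrt (frobSq M) * Real.sqrt (∑ q : Fin n × Fin r, g q.2 q.1 ^ 2) := by
        rw [← hcsum]; exact hCS
    _ ≤ Real.sqrt (frobSq M) * Real.sqrt ((r : ℝ) * d ^ 2) := by
        apply mul_le_mul_of_nonneg_left (Real.sqrt_le_sqrt hgsum) (Real.sqrt_nonneg _)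
    _ = d * Real.sqrt (M.rank) * Real.sqrt (frobSq M) := by
        rw [hsqrt, hrank]; ring

lemma rank_sub_le {m n : ℕ} (C D : Matrix (Fin m) (Fin n) ℝ) :
    (C - D).rank ≤ C.rank + D.rank := by
  have hle : LinearMap.range (C - D).mulVecLin ≤
      LinearMap.range C.mulVecLin ⊔ LinearMap.range D.mulVecLin := by
    rintro v ⟨w, rfl⟩
    rw [Matrix.mulVecLin_apply, Matrix.sub_mulVec]
    exact Submodule.sub_mem _ (Submodule.mem_sup_left ⟨w, rfl⟩)
      (Submodule.mem_sup_right ⟨w, rfl⟩)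
  calc (C - D).rank
      = Module.finrank ℝ (LinearMap.range (C - D).mulVecLin) := rfl
    _ ≤ Module.finrank ℝ (LinearMap.range C.mulVecLin ⊔ LinearMap.range D.mulVecLin :
          Submodule ℝ (Fin m → ℝ)) := Submodule.finrank_mono hle
    _ ≤ Module.finrank ℝ (LinearMap.range C.mulVecLin)
          + Module.finrank ℝ (LinearMap.range D.mulVecLin) :=
        Submodule.finrank_add_le_finrank_add_finrank _ _
    _ = C.rank + D.rank := rfl

lemma frobSq_nonneg {m n : ℕ} (C : Matrix (Fin m) (Fin n) ℝ) : 0 ≤ frobSq C :=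
  Finset.sum_nonneg fun i _ => Finset.sum_nonneg fun j _ => sq_nonneg _

lemma frobSq_sub {m n : ℕ} (C D : Matrix (Fin m) (Fin n) ℝ) :
    frobSq (C - D) = frobSq C - 2 * frobInner C D + frobSq D := by
  simp only [frobSq, frobInner, Matrix.sub_apply, Finset.mul_sum,
    ← Finset.sum_add_distrib, ← Finset.sum_sub_distrib]
  exact Finset.sum_congr rfl fun i _ => Finset.sum_congr rfl fun j _ => by ring

lemma frobInner_sub_right {m n : ℕ} (E U W : Matrix (Fin m) (Fin n) ℝ) :
    frobInner E (U - W) = frobInner E U - frobInner E W := by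
  simp only [frobInner, Matrix.sub_apply, ← Finset.sum_sub_distrib]
  exact Finset.sum_congr rfl fun i _ => Finset.sum_congr rfl fun j _ => by ring

lemma frobCS {m n : ℕ} (C D : Matrix (Fin m) (Fin n) ℝ) :
    frobInner C D ≤ Real.sqrt (frobSq C) * Real.sqrt (frobSq D) := by
  have h := Real.sum_mul_le_sqrt_mul_sqrt (Finset.univ : Finset (Fin m × Fin n))
    (fun q => C q.1 q.2) (fun q => D q.1 q.2)
  rw [Fintype.sum_prod_type, Fintype.sum_prod_type, Fintype.sum_prod_type] at h
  exact h

lemma neg_frobCS {m n : ℕ} (C D : Matrix (Fin m) (Fin n) ℝ) :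
    -(Real.sqrt (frobSq C) * Real.sqrt (frobSq D)) ≤ frobInner C D := by
  have h := frobCS (-C) D
  have h1 : frobInner (-C) D = -frobInner C D := by
    simp [frobInner, Matrix.neg_apply]
  have h2 : frobSq (-C) = frobSq C := by
    simp only [frobSq, Matrix.neg_apply]
    exact Finset.sum_congr rfl fun i _ => Finset.sum_congr rfl fun j _ => by ring
  rw [h1, h2] at h
  linarith

lemma frobInner_proj {m n : ℕ} (P : Matrix (Fin m) (Fin m) ℝ)
    (C M : Matrix (Fin m) (Fin n) ℝ) :
    frobInner C (P * M) = frobInner (Pᵀ * C) M := by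
  have L : frobInner C (P * M) = ∑ i : Fin m, ∑ k : Fin m, ∑ j : Fin n,
      C i j * (P i k * M k j) := by
    rw [frobInner]
    refine Finset.sum_congr rfl fun i _ => ?_
    calc ∑ j, C i j * (P * M) i j
        = ∑ j : Fin n, ∑ k : Fin m, C i j * (P i k * M k j) := by
          refine Finset.sum_congr rfl fun j _ => ?_
          rw [Matrix.mul_apply, Finset.mul_sum]
      _ = ∑ k : Fin m, ∑ j : Fin n, C i j * (P i k * M k j) := Finset.sum_comm ..
  have R : frobInner (Pᵀ * C) M = ∑ k : Fin m, ∑ j : Fin n, ∑ i : Fin m,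
      C i j * (P i k * M k j) := by
    rw [frobInner]
    refine Finset.sum_congr rfl fun k _ => ?_
    refine Finset.sum_congr rfl fun j _ => ?_
    rw [Matrix.mul_apply, Finset.sum_mul]
    refine Finset.sum_congr rfl fun i _ => ?_
    rw [Matrix.transpose_apply]
    ring
  rw [L, R]
  calc ∑ i : Fin m, ∑ k : Fin m, ∑ j : Fin n, C i j * (P i k * M k j)
      = ∑ k : Fin m, ∑ i : Fin m, ∑ j : Fin n, C i j * (P i k * M k j) := Finset.sum_comm ..
    _ = ∑ k : Fin m, ∑ j : Fin n, ∑ i : Fin m, C i j * (P i k * M k j) :=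
        Finset.sum_congr rfl fun k _ => Finset.sum_comm ..

end Aux

set_option maxHeartbeats 1000000 in
/-- Theorem 7 (deterministic oracle inequality): on the event (1+θ)d₁²(PE) ≤ μ, the RSC
estimator Â satisfies ‖XÂ − XA‖_F² ≤ c(θ)²‖XB − XA‖_F² + 2c(θ)μ rank(B) for every B. -/
theorem rsc_oracle_inequality {m n p : ℕ}
    (Y : Matrix (Fin m) (Fin n) ℝ) (X : Matrix (Fin m) (Fin p) ℝ)
    (A : Matrix (Fin p) (Fin n) ℝ)
    (P : Matrix (Fin m) (Fin m) ℝ)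
    (hPsymm : Pᵀ = P) (hPidem : P * P = P) (hPX : P * X = X)
    (hPrange : ∀ u : Fin m → ℝ, ∃ w : Fin p → ℝ, P *ᵥ u = X *ᵥ w)
    (μ : ℝ) (hμ : 0 < μ)
    (Ahat : Matrix (Fin p) (Fin n) ℝ)
    (hmin : ∀ B : Matrix (Fin p) (Fin n) ℝ,
      frobSq (Y - X * Ahat) + μ * Ahat.rank ≤ frobSq (Y - X * B) + μ * B.rank)
    (θ : ℝ) (hθ : 0 < θ)
    (hevent : (1 + θ) * (sv (P * (Y - X * A)) 1) ^ 2 ≤ μ) :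
    ∀ B : Matrix (Fin p) (Fin n) ℝ,
      frobSq (X * Ahat - X * A)
        ≤ (1 + 2 / θ) ^ 2 * frobSq (X * B - X * A) + 2 * (1 + 2 / θ) * μ * B.rank := by
  intro B
  set E := Y - X * A with hE
  set Dh := X * Ahat - X * A with hDh
  set Db := X * B - X * A with hDb
  set W := X * Ahat - X * B with hW
  set d := sv (P * E) 1 with hd
  have hd0 : 0 ≤ d := sv_nonneg _
  set ra : ℝ := (Ahat.rank : ℝ) with hra
  set rb : ℝ := (B.rank : ℝ) with hrb
  have hra0 : 0 ≤ ra := Nat.cast_nonneg _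
  have hrb0 : 0 ≤ rb := Nat.cast_nonneg _
  set h := Real.sqrt (frobSq Dh) with hh
  set g := Real.sqrt (frobSq Db) with hg
  have hh0 : 0 ≤ h := Real.sqrt_nonneg _
  have hg0 : 0 ≤ g := Real.sqrt_nonneg _
  have hh2 : h ^ 2 = frobSq Dh := Real.sq_sqrt (frobSq_nonneg _)
  have hg2 : g ^ 2 = frobSq Db := Real.sq_sqrt (frobSq_nonneg _)
  -- basic rearrangements
  have hYh : Y - X * Ahat = E - Dh := by
    rw [hE, hDh]; exact (sub_sub_sub_cancel_right _ _ _).symm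
  have hYb : Y - X * B = E - Db := by
    rw [hE, hDb]; exact (sub_sub_sub_cancel_right _ _ _).symm
  have hWdiff : W = Dh - Db := by
    rw [hW, hDh, hDb]; exact (sub_sub_sub_cancel_right _ _ _).symm
  -- from minimality
  have hm := hmin B
  rw [hYh, hYb, frobSq_sub E Dh, frobSq_sub E Db] at hm
  -- frobSq Dh ≤ frobSq Db + 2 * frobInner E W + μ rb - μ ra
  have hstep : frobSq Dh ≤ frobSq Db + 2 * frobInner E W + μ * rb - μ * ra := by
    have hWi : frobInner E W = frobInner E Dh - frobInner E Db := by
      rw [hWdiff, frobInner_sub_right]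
    rw [hWi]
    rw [hra, hrb]
    linarith
  -- bound the cross term
  have hPW : P * W = W := by
    rw [hW, Matrix.mul_sub, ← Matrix.mul_assoc, ← Matrix.mul_assoc, hPX]
  have hEW : frobInner E W = frobInner (P * E) W := by
    conv_lhs => rw [← hPW]
    rw [frobInner_proj, hPsymm]
  have hop : ∀ u : Fin m → ℝ, ((P * E)ᵀ *ᵥ u) ⬝ᵥ ((P * E)ᵀ *ᵥ u) ≤ d ^ 2 * (u ⬝ᵥ u) := by
    intro u
    rw [hd]
    exact op_bound (P * E) u
  have hkey : frobInner (P * E) W ≤ d * Real.sqrt (W.rank) * Real.sqrt (frobSq W) :=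
    frobInner_le_key (P * E) W d hd0 hop
  -- rank bound
  have hrankW : (W.rank : ℝ) ≤ ra + rb := by
    have h1 : W.rank ≤ (X * Ahat).rank + (X * B).rank := rank_sub_le _ _
    have h2 : (X * Ahat).rank ≤ Ahat.rank := Matrix.rank_mul_le_right _ _
    have h3 : (X * B).rank ≤ B.rank := Matrix.rank_mul_le_right _ _
    rw [hra, hrb]
    push_cast
    have := le_trans h1 (Nat.add_le_add h2 h3)
    exact_mod_cast this
  have hsqrtrank : Real.sqrt (W.rank) ≤ Real.sqrt (ra + rb) := Real.sqrt_le_sqrt hrankW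
  -- frobSq W ≤ (h + g)^2
  have hWsq : frobSq W ≤ (h + g) ^ 2 := by
    rw [hWdiff, frobSq_sub]
    have := neg_frobCS Dh Db
    rw [← hh, ← hg] at this
    nlinarith [hh2, hg2]
  have hsqrtW : Real.sqrt (frobSq W) ≤ h + g := by
    calc Real.sqrt (frobSq W) ≤ Real.sqrt ((h + g) ^ 2) := Real.sqrt_le_sqrt hWsq
      _ = h + g := Real.sqrt_sq (by linarith)
  set R := Real.sqrt (ra + rb) with hR
  have hR0 : 0 ≤ R := Real.sqrt_nonneg _
  have hR2 : R ^ 2 = ra + rb := Real.sq_sqrt (by linarith)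
  have hcross : frobInner E W ≤ d * R * (h + g) := by
    rw [hEW]
    calc frobInner (P * E) W ≤ d * Real.sqrt (W.rank) * Real.sqrt (frobSq W) := hkey
      _ ≤ d * R * (h + g) := by
          apply mul_le_mul
          · exact mul_le_mul_of_nonneg_left hsqrtrank hd0
          · exact hsqrtW
          · exact Real.sqrt_nonneg _
          · exact mul_nonneg hd0 hR0
  -- main inequality in terms of h, g
  have hF1 : h ^ 2 ≤ g ^ 2 + 2 * (d * R * (h + g)) + μ * rb - μ * ra := by
    rw [hh2, hg2]
    linarith
  have hF2 : (1 + θ) * d ^ 2 ≤ μ := by rw [hd, hE]; exact hevent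
  have hF4 : (1 + θ) * d ^ 2 * R ^ 2 ≤ μ * R ^ 2 :=
    mul_le_mul_of_nonneg_right hF2 (sq_nonneg R)
  -- polynomial inequality
  have hP : θ ^ 2 * h ^ 2 ≤ (θ + 2) ^ 2 * g ^ 2 + 2 * θ * (θ + 2) * (μ * rb) := by
    have hc1 : (0:ℝ) ≤ 2 * θ * (θ + 2) := by positivity
    have t1 := mul_le_mul_of_nonneg_left hF1 hc1
    have t2 : (0:ℝ) ≤ θ * (2 * h - (θ + 2) * d * R) ^ 2 := mul_nonneg hθ.le (sq_nonneg _)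
    have t3 : (0:ℝ) ≤ (θ + 2) * (2 * g - θ * d * R) ^ 2 :=
      mul_nonneg (by linarith) (sq_nonneg _)
    have t4 := mul_le_mul_of_nonneg_left hF4 hc1
    have t5 : 2 * θ * (θ + 2) * (μ * R ^ 2) = 2 * θ * (θ + 2) * (μ * (ra + rb)) := by rw [hR2]
    nlinarith [t1, t2, t3, t4, t5]
  -- conclude
  have hθ2 : (0 : ℝ) < θ ^ 2 := by positivity
  rw [show frobSq Dh = h ^ 2 from hh2.symm, show frobSq Db = g ^ 2 from hg2.symm]
  have hgoal : θ ^ 2 * (h ^ 2) ≤ θ ^ 2 * ((1 + 2 / θ) ^ 2 * g ^ 2 + 2 * (1 + 2 / θ) * μ * rb) := by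
    calc θ ^ 2 * (h ^ 2) ≤ (θ + 2) ^ 2 * g ^ 2 + 2 * θ * (θ + 2) * (μ * rb) := hP
      _ = θ ^ 2 * ((1 + 2 / θ) ^ 2 * g ^ 2 + 2 * (1 + 2 / θ) * μ * rb) := by
          field_simp
  exact le_of_mul_le_mul_left hgoal hθ2
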